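/- Let G be a finite non-abelian {1,2,3}-decomposable group whose derived subgroup G′ has order 2. Then G′ = Z(G), G is a 2-group of order 8, and G is isomorphic to D₈ or Q₈. -/

import Mathlib

/-- `ncc A` is the number of conjugacy classes of `G` contained in the subgroup `A`. -/
noncomputable def ncc {G : Type*} [Group G] (A : Subgroup G) : ℕ :=
  Nat.card {c : ConjClasses G // c.carrier ⊆ (A : Set G)}

/-- `KG G` is the set of values `ncc A` for `A` a proper normal subgroup of `G`. -/
def KG (G : Type*) [Group G] : Set ℕ :=
  {n | ∃ A : Subgroup G, A.Normal ∧ A ≠ ⊤ ∧ ncc A = n}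

/-- `G` is `X`-decomposable if `KG G = X`. -/
def XDecomposable (G : Type*) [Group G] (X : Set ℕ) : Prop := KG G = X

section AuxLemmas

variable {G : Type*} [Group G]

open scoped commutatorElement

lemma rz_congr {r : G} (hr : orderOf r = 4) {m n : ℤ} (h : (m : ZMod 4) = n) :
    r ^ m = r ^ n := by
  rw [zpow_eq_zpow_iff_modEq, hr]
  exact_mod_cast (ZMod.intCast_eq_intCast_iff m n 4).mp h

lemma rz_inj {r : G} (hr : orderOf r = 4) {m n : ℤ} (h : r ^ m = r ^ n) :
    (m : ZMod 4) = n := by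
  rw [zpow_eq_zpow_iff_modEq, hr] at h
  exact_mod_cast (ZMod.intCast_eq_intCast_iff m n 4).mpr (by exact_mod_cast h)

lemma hrs_lemma {r s : G} (h1 : s * r * s⁻¹ = r⁻¹) (m : ℤ) :
    r ^ m * s = s * r ^ (-m) := by
  have key : ∀ k : ℤ, s * r ^ k * s⁻¹ = r ^ (-k) := by
    intro k
    rw [← conj_zpow, h1, inv_zpow']
  have := key (-m)
  rw [neg_neg] at this
  rw [← this]
  group

lemma mem_zp (r : G) (m : ℤ) : r ^ m ∈ Subgroup.zpowers r :=
  zpow_mem (Subgroup.mem_zpowers r) _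

lemma toD8 {r s : G} (hr : orderOf r = 4) (h1 : s * r * s⁻¹ = r⁻¹) (h2 : s * s = 1)
    (hs : s ∉ Subgroup.zpowers r) (hcard : Nat.card G = 8) [Finite G] :
    Nonempty (G ≃* DihedralGroup 4) := by
  let f : DihedralGroup 4 → G := fun x =>
    match x with
    | .r i => r ^ (i.val : ℤ)
    | .sr i => s * r ^ (i.val : ℤ)
  have cast_val : ∀ i : ZMod 4, ((i.val : ℤ) : ZMod 4) = i := by
    intro i
    push_cast
    simp [ZMod.natCast_val, ZMod.cast_id]
  have hmul : ∀ x y : DihedralGroup 4, f (x * y) = f x * f y := by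
    rintro (i | i) (j | j)
    · show r ^ (((i+j).val : ℤ)) = r ^ (i.val : ℤ) * r ^ (j.val : ℤ)
      rw [← zpow_add]
      exact rz_congr hr (by push_cast [cast_val]; ring)
    · show s * r ^ (((j-i).val : ℤ)) = r ^ (i.val : ℤ) * (s * r ^ (j.val : ℤ))
      rw [← mul_assoc, hrs_lemma h1, mul_assoc, ← zpow_add]
      exact congrArg _ (rz_congr hr (by push_cast [cast_val]; ring))
    · show s * r ^ (((i+j).val : ℤ)) = s * r ^ (i.val : ℤ) * r ^ (j.val : ℤ)
      rw [mul_assoc, ← zpow_add]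
      exact congrArg _ (rz_congr hr (by push_cast [cast_val]; ring))
    · show r ^ (((j-i).val : ℤ)) = s * r ^ (i.val : ℤ) * (s * r ^ (j.val : ℤ))
      rw [mul_assoc, ← mul_assoc (r ^ (i.val : ℤ)), hrs_lemma h1,
        ← mul_assoc, ← mul_assoc, h2, one_mul, ← zpow_add]
      exact rz_congr hr (by push_cast [cast_val]; ring)
  have val_inj : ∀ i j : ZMod 4, ((i.val : ℤ) : ZMod 4) = ((j.val : ℤ) : ZMod 4) → i = j := by
    intro i j hij
    rwa [cast_val, cast_val] at hij
  have hinj : Function.Injective f := by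
    rintro (i | i) (j | j) hij
    · exact congrArg _ (val_inj i j (rz_inj hr hij))
    · exfalso
      apply hs
      have hs' : s = r ^ (i.val : ℤ) * (r ^ (j.val : ℤ))⁻¹ := by
        rw [show r ^ (i.val : ℤ) = s * r ^ (j.val : ℤ) from hij]; group
      rw [hs']
      exact mul_mem (mem_zp r _) (inv_mem (mem_zp r _))
    · exfalso
      apply hs
      have hs' : s = r ^ (j.val : ℤ) * (r ^ (i.val : ℤ))⁻¹ := by
        rw [show r ^ (j.val : ℤ) = s * r ^ (i.val : ℤ) from hij.symm]; group
      rw [hs']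
      exact mul_mem (mem_zp r _) (inv_mem (mem_zp r _))
    · exact congrArg _ (val_inj i j (rz_inj hr (mul_left_cancel hij)))
  have hcards : Nat.card (DihedralGroup 4) = Nat.card G := by
    rw [hcard, Nat.card_eq_fintype_card, DihedralGroup.card]
  exact ⟨(MulEquiv.ofBijective (MonoidHom.mk' f hmul)
    ((Nat.bijective_iff_injective_and_card f).mpr ⟨hinj, hcards⟩)).symm⟩


lemma toQ8 {r s : G} (hr : orderOf r = 4) (h1 : s * r * s⁻¹ = r⁻¹) (h2 : s * s = r ^ (2 : ℤ))
    (hs : s ∉ Subgroup.zpowers r) (hcard : Nat.card G = 8) [Finite G] :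
    Nonempty (G ≃* QuaternionGroup 2) := by
  let f : QuaternionGroup 2 → G := fun x =>
    match x with
    | .a i => r ^ (i.val : ℤ)
    | .xa i => s * r ^ (i.val : ℤ)
  have cast_val : ∀ i : ZMod (2 * 2), ((i.val : ℤ) : ZMod (2 * 2)) = i := by
    intro i
    push_cast
    simp [ZMod.natCast_val, ZMod.cast_id]
  have hmul : ∀ x y : QuaternionGroup 2, f (x * y) = f x * f y := by
    rintro (i | i) (j | j)
    · show r ^ (((i+j).val : ℤ)) = r ^ (i.val : ℤ) * r ^ (j.val : ℤ)
      rw [← zpow_add]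
      exact rz_congr hr (by push_cast [cast_val]; ring)
    · show s * r ^ (((j-i).val : ℤ)) = r ^ (i.val : ℤ) * (s * r ^ (j.val : ℤ))
      rw [← mul_assoc, hrs_lemma h1, mul_assoc, ← zpow_add]
      exact congrArg _ (rz_congr hr (by push_cast [cast_val]; ring))
    · show s * r ^ (((i+j).val : ℤ)) = s * r ^ (i.val : ℤ) * r ^ (j.val : ℤ)
      rw [mul_assoc, ← zpow_add]
      exact congrArg _ (rz_congr hr (by push_cast [cast_val]; ring))
    · show r ^ ((((2 : ZMod (2 * 2)) + j - i).val : ℤ)) =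
        s * r ^ (i.val : ℤ) * (s * r ^ (j.val : ℤ))
      rw [mul_assoc, ← mul_assoc (r ^ (i.val : ℤ)), hrs_lemma h1,
        ← mul_assoc, ← mul_assoc, h2, ← zpow_add, ← zpow_add]
      exact rz_congr hr (by push_cast [cast_val]; ring)
  have val_inj : ∀ i j : ZMod (2 * 2),
      ((i.val : ℤ) : ZMod 4) = ((j.val : ℤ) : ZMod 4) → i = j := by
    intro i j hij
    have := hij
    rwa [cast_val, cast_val] at this
  have hinj : Function.Injective f := by
    rintro (i | i) (j | j) hij
    · exact congrArg _ (val_inj i j (rz_inj hr hij))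
    · exfalso
      apply hs
      have hs' : s = r ^ (i.val : ℤ) * (r ^ (j.val : ℤ))⁻¹ := by
        rw [show r ^ (i.val : ℤ) = s * r ^ (j.val : ℤ) from hij]; group
      rw [hs']
      exact mul_mem (mem_zp r _) (inv_mem (mem_zp r _))
    · exfalso
      apply hs
      have hs' : s = r ^ (j.val : ℤ) * (r ^ (i.val : ℤ))⁻¹ := by
        rw [show r ^ (j.val : ℤ) = s * r ^ (i.val : ℤ) from hij.symm]; group
      rw [hs']
      exact mul_mem (mem_zp r _) (inv_mem (mem_zp r _))
    · exact congrArg _ (val_inj i j (rz_inj hr (mul_left_cancel hij)))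
  have hcards : Nat.card (QuaternionGroup 2) = Nat.card G := by
    rw [hcard, Nat.card_eq_fintype_card, QuaternionGroup.card]
  exact ⟨(MulEquiv.ofBijective (MonoidHom.mk' f hmul)
    ((Nat.bijective_iff_injective_and_card f).mpr ⟨hinj, hcards⟩)).symm⟩


lemma ord4_ne_sq {r : G} (hr : orderOf r = 4) (h : r * r = 1) : False := by
  have h2 : r ^ (2 : ℕ) = 1 := by rwa [pow_two]
  have := orderOf_dvd_iff_pow_eq_one.mpr h2
  rw [hr] at this
  norm_num at this

lemma commute_all_of_gen {r s : G} (hrs : r * s = s * r)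
    (htop : Subgroup.closure ({r, s} : Set G) = ⊤) : ∀ a b : G, a * b = b * a := by
  have key : ∀ x : G, Commute r x ∧ Commute s x := by
    intro x
    have hx : x ∈ Subgroup.closure ({r, s} : Set G) := htop ▸ Subgroup.mem_top x
    induction hx using Subgroup.closure_induction with
    | mem y hy =>
      rcases hy with rfl | rfl
      · exact ⟨Commute.refl y, hrs.symm⟩
      · exact ⟨hrs, Commute.refl y⟩
    | one => exact ⟨Commute.one_right r, Commute.one_right s⟩
    | mul y z hy hz ihy ihz =>
      exact ⟨ihy.1.mul_right ihz.1, ihy.2.mul_right ihz.2⟩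
    | inv y hy ihy => exact ⟨ihy.1.inv_right, ihy.2.inv_right⟩
  intro a b
  have ha : a ∈ Subgroup.closure ({r, s} : Set G) := htop ▸ Subgroup.mem_top a
  have hcom : Commute a b := by
    clear htop
    induction ha using Subgroup.closure_induction with
    | mem y hy =>
      rcases hy with rfl | rfl
      · exact (key b).1
      · exact (key b).2
    | one => exact Commute.one_left b
    | mul y z hy hz ihy ihz => exact ihy.mul_left ihz
    | inv y hy ihy => exact ihy.inv_left
  exact hcom

lemma div8 {d : ℕ} (hd : d ∣ 8) : d = 1 ∨ d = 2 ∨ d = 4 ∨ d = 8 := by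
  have h1 : d ≤ 8 := Nat.le_of_dvd (by norm_num) hd
  have h0 : 0 < d := Nat.pos_of_dvd_of_pos hd (by norm_num)
  interval_cases d <;> revert hd <;> decide

lemma classify8' [Finite G] (hcard : Nat.card G = 8)
    (hna : ¬ ∀ a b : G, a * b = b * a) :
    ∃ r s : G, orderOf r = 4 ∧ s * r * s⁻¹ = r⁻¹ ∧ s ∉ Subgroup.zpowers r ∧
      (s * s = 1 ∨ s * s = r ^ (2 : ℤ)) := by
  classical
  have no8 : ∀ g : G, orderOf g ≠ 8 := by
    intro g hg
    apply hna
    have htop : Subgroup.zpowers g = ⊤ := by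
      apply Subgroup.eq_top_of_card_eq
      rw [Nat.card_zpowers, hg, hcard]
    intro a b
    have ha : a ∈ Subgroup.zpowers g := htop ▸ Subgroup.mem_top a
    have hb : b ∈ Subgroup.zpowers g := htop ▸ Subgroup.mem_top b
    obtain ⟨m, rfl⟩ := ha
    obtain ⟨n, rfl⟩ := hb
    rw [← zpow_add, ← zpow_add, add_comm]
  have hex : ∃ g : G, orderOf g = 4 := by
    by_contra hc
    push_neg at hc
    apply hna
    have sq1 : ∀ g : G, g * g = 1 := by
      intro g
      have hd := orderOf_dvd_natCard g
      rw [hcard] at hd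
      have h2 : orderOf g ∣ 2 := by
        rcases div8 hd with h | h | h | h
        · rw [h]; norm_num
        · rw [h]
        · exact absurd h (hc g)
        · exact absurd h (no8 g)
      have := orderOf_dvd_iff_pow_eq_one.mp h2
      rwa [pow_two] at this
    have inv_eq : ∀ g : G, g⁻¹ = g := fun g => inv_eq_of_mul_eq_one_right (sq1 g)
    intro a b
    calc a * b = ((a * b)⁻¹)⁻¹ := by rw [inv_inv]
    _ = (b⁻¹ * a⁻¹)⁻¹ := by rw [mul_inv_rev]
    _ = b⁻¹ * a⁻¹ := inv_eq _
    _ = b * a := by rw [inv_eq, inv_eq]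
  obtain ⟨r, hr⟩ := hex
  set R := Subgroup.zpowers r with hR
  have cardR : Nat.card R = 4 := by rw [hR, Nat.card_zpowers, hr]
  have hidx : R.index = 2 := by
    have hmi := Subgroup.card_mul_index R
    rw [cardR, hcard] at hmi
    omega
  have hsex : ∃ s : G, s ∉ R := by
    by_contra hc
    push_neg at hc
    have htop : R = ⊤ := by rwa [Subgroup.eq_top_iff']
    rw [htop, Subgroup.index_top] at hidx
    omega
  obtain ⟨s, hs⟩ := hsex
  have hrinR : r ∈ R := Subgroup.mem_zpowers r
  have hconj : s * r * s⁻¹ ∈ R := by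
    rw [Subgroup.mul_mem_iff_of_index_two hidx, Subgroup.mul_mem_iff_of_index_two hidx,
      Subgroup.inv_mem_iff]
    tauto
  -- write the conjugate as a small power
  rw [hR, Subgroup.mem_zpowers_iff] at hconj
  obtain ⟨m, hm⟩ := hconj
  have hcast : ∀ m : ℤ, (((m : ZMod 4).val : ℤ) : ZMod 4) = (m : ZMod 4) := by
    intro m'
    push_cast [ZMod.natCast_val]
    simp [ZMod.cast_id]
  have hkex : ∃ k : ℕ, k < 4 ∧ s * r * s⁻¹ = r ^ (k : ℤ) :=
    ⟨(m : ZMod 4).val, ZMod.val_lt _, by rw [← hm]; exact rz_congr hr (hcast m).symm⟩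
  obtain ⟨k, hklt, hk⟩ := hkex
  have h1 : s * r * s⁻¹ = r⁻¹ := by
    interval_cases k
    · exfalso
      simp only [Nat.cast_zero, zpow_zero] at hk
      have : r = 1 := by
        have hre : r = s⁻¹ * (s * r * s⁻¹) * s := by group
        rw [hk] at hre
        simpa using hre
      rw [this] at hr
      simp at hr
    · exfalso
      simp only [Nat.cast_one, zpow_one] at hk
      have hrs : r * s = s * r := by
        have : s * r = (s * r * s⁻¹) * s := by group
        rw [hk] at this
        rw [this]
      -- closure of {r, s} is everything, so G is abelian
      apply hna
      set H := Subgroup.closure ({r, s} : Set G) with hH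
      have hRH : R ≤ H := by
        rw [hR, Subgroup.zpowers_le]
        exact Subgroup.subset_closure (by simp)
      have hsH : s ∈ H := Subgroup.subset_closure (by simp)
      have hdvd1 : (4 : ℕ) ∣ Nat.card H := cardR ▸ Subgroup.card_dvd_of_le hRH
      have hdvd2 : Nat.card H ∣ 8 := hcard ▸ Subgroup.card_subgroup_dvd_card H
      have hHtop : H = ⊤ := by
        rcases div8 hdvd2 with h | h | h | h
        · exact absurd (h ▸ hdvd1) (by norm_num)
        · exact absurd (h ▸ hdvd1) (by norm_num)
        · exfalso
          have : R = H := Subgroup.eq_of_le_of_card_ge hRH (by rw [h, cardR])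
          exact hs (this ▸ hsH)
        · exact Subgroup.eq_top_of_card_eq H (by rw [h, hcard])
      exact commute_all_of_gen hrs hHtop
    · exfalso
      have h4 : s * (r * r) * s⁻¹ = (s * r * s⁻¹) * (s * r * s⁻¹) := by group
      rw [hk] at h4
      have hrr : r * r = 1 := by
        have : r * r = s⁻¹ * (s * (r * r) * s⁻¹) * s := by group
        rw [h4] at this
        rw [this, ← zpow_add]
        have : r ^ (((2:ℕ):ℤ) + ((2:ℕ):ℤ)) = 1 := by
          have h40 : r ^ (((2:ℕ):ℤ) + ((2:ℕ):ℤ)) = r ^ (0:ℤ) := rz_congr hr (by decide)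
          rwa [zpow_zero] at h40
        calc s⁻¹ * r ^ (((2:ℕ):ℤ) + ((2:ℕ):ℤ)) * s = s⁻¹ * 1 * s := by rw [this]
        _ = 1 := by group
      exact ord4_ne_sq hr hrr
    · rw [hk]
      have : r ^ ((3:ℕ):ℤ) = r ^ (-1 : ℤ) := rz_congr hr (by decide)
      rw [this, zpow_neg_one]
  -- s^2 is a small power of r
  have hss : s * s ∈ R := Subgroup.mul_self_mem_of_index_two hidx s
  rw [hR, Subgroup.mem_zpowers_iff] at hss
  obtain ⟨m2, hm2⟩ := hss
  have hkex2 : ∃ k : ℕ, k < 4 ∧ s * s = r ^ (k : ℤ) :=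
    ⟨(m2 : ZMod 4).val, ZMod.val_lt _, by rw [← hm2]; exact rz_congr hr (hcast m2).symm⟩
  obtain ⟨k, hklt, hk2⟩ := hkex2
  refine ⟨r, s, hr, h1, hs, ?_⟩
  have no_odd : ∀ hkk : s * s = r ^ ((1:ℕ):ℤ) ∨ s * s = r ^ ((3:ℕ):ℤ), False := by
    intro hkk
    have hdvd4 : orderOf s ∣ 4 := by
      have hd := orderOf_dvd_natCard s
      rw [hcard] at hd
      rcases div8 hd with h | h | h | h
      · rw [h]; norm_num
      · rw [h]; norm_num
      · rw [h]
      · exact absurd h (no8 s)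
    have s4 : s ^ (4 : ℕ) = 1 := orderOf_dvd_iff_pow_eq_one.mp hdvd4
    have s4' : (s * s) * (s * s) = 1 := by
      rw [← s4]; simp [pow_succ, mul_assoc]
    have hrr : r * r = 1 := by
      rcases hkk with hkk | hkk
      · rw [hkk, ← zpow_add] at s4'
        rw [← zpow_two]
        rw [show ((2:ℤ)) = ((1:ℕ):ℤ) + ((1:ℕ):ℤ) by norm_num]
        exact s4'
      · rw [hkk, ← zpow_add] at s4'
        rw [← zpow_two]
        calc r ^ (2:ℤ) = r ^ (((3:ℕ):ℤ) + ((3:ℕ):ℤ)) := rz_congr hr (by decide)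
        _ = 1 := s4'
    exact ord4_ne_sq hr hrr
  interval_cases k
  · left; simpa using hk2
  · exact absurd (Or.inl hk2) no_odd
  · right; exact_mod_cast hk2
  · exact absurd (Or.inr hk2) no_odd


theorem main_part1 [Finite G] (hna : ¬ ∀ a b : G, a * b = b * a)
    (h : XDecomposable G {1, 2, 3}) (h2 : Nat.card (commutator G) = 2) :
    commutator G = Subgroup.center G ∧ Nat.card G = 8 := by
  classical
  push_neg at hna
  obtain ⟨a, b, hab⟩ := hna
  obtain ⟨y, hy1, hyu⟩ := (Nat.card_eq_two_iff' (1 : commutator G)).mp h2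
  set z : G := (y : G) with hzdef
  have hzK : z ∈ commutator G := y.2
  have hz1 : z ≠ 1 := fun hh => hy1 (Subtype.ext hh)
  have hKz : ∀ w, w ∈ commutator G → w = 1 ∨ w = z := by
    intro w hw
    by_cases hw1 : w = 1
    · exact Or.inl hw1
    · right
      have : (⟨w, hw⟩ : commutator G) = y :=
        hyu ⟨w, hw⟩ (fun hh => hw1 (congrArg Subtype.val hh))
      exact congrArg Subtype.val this
  have hz2 : z * z = 1 := by
    rcases hKz (z * z) (mul_mem hzK hzK) with hh | hh
    · exact hh
    · exact absurd (mul_right_cancel (a := z) (by rw [hh, one_mul])) hz1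
  have hzc : ∀ g : G, g * z = z * g := by
    intro g
    have hmem : g * z * g⁻¹ ∈ commutator G :=
      (Subgroup.commutator_normal ⊤ ⊤).conj_mem z hzK g
    rcases hKz _ hmem with hh | hh
    · exfalso
      apply hz1
      calc z = g⁻¹ * (g * z * g⁻¹) * g := by group
      _ = 1 := by rw [hh]; group
    · calc g * z = (g * z * g⁻¹) * g := by group
      _ = z * g := by rw [hh]
  have conj2 : ∀ g x : G, g * x * g⁻¹ = x ∨ g * x * g⁻¹ = z * x := by
    intro g x
    have hmem : ⁅g, x⁆ ∈ commutator G := by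
      rw [commutator_def]
      exact Subgroup.commutator_mem_commutator (Subgroup.mem_top g) (Subgroup.mem_top x)
    rw [commutatorElement_def] at hmem
    rcases hKz _ hmem with hh | hh
    · left
      calc g * x * g⁻¹ = (g * x * g⁻¹ * x⁻¹) * x := by group
      _ = x := by rw [hh]; group
    · right
      calc g * x * g⁻¹ = (g * x * g⁻¹ * x⁻¹) * x := by group
      _ = z * x := by rw [hh]
  set C := Subgroup.centralizer ({a} : Set G) with hCdef
  have memC : ∀ w : G, w ∈ C ↔ a * w = w * a := by
    intro w
    rw [hCdef, Subgroup.mem_centralizer_iff]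
    simp
  have haC : a ∈ C := (memC a).mpr rfl
  have hzC : z ∈ C := (memC z).mpr (hzc a)
  have hbC : b ∉ C := fun hb => hab ((memC b).mp hb)
  have hzaC : z * a ∈ C := mul_mem hzC haC
  have hCtop : C ≠ ⊤ := fun hC => hbC (hC ▸ Subgroup.mem_top b)
  have ha1 : a ≠ 1 := by
    intro hh
    exact hab (by rw [hh, one_mul, mul_one])
  have haz : a ≠ z := by
    intro hh
    exact hab (by rw [hh, hzc b])
  have hza1 : z * a ≠ 1 := by
    intro hh
    have : a = z := by
      have := congrArg (z * ·) hh
      simpa [← mul_assoc, hz2] using this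
    exact haz this
  have hzaz : z * a ≠ z := by
    intro hh
    exact ha1 (mul_left_cancel (a := z) (by rw [hh, mul_one]))
  have hzaa : z * a ≠ a := by
    intro hh
    exact hz1 (mul_right_cancel (b := a) (by rw [hh, one_mul]))
  have hCnormal : C.Normal := by
    constructor
    intro n hn g
    rw [memC] at hn ⊢
    have hc : g⁻¹ * a * g = a ∨ g⁻¹ * a * g = z * a := by
      have := conj2 g⁻¹ a
      simpa using this
    have hnc : n * (g⁻¹ * a * g) = (g⁻¹ * a * g) * n := by
      rcases hc with hc | hc
      · rw [hc]; exact hn.symm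
      · rw [hc]
        calc n * (z * a) = (n * z) * a := (mul_assoc n z a).symm
        _ = (z * n) * a := by rw [hzc n]
        _ = z * (n * a) := mul_assoc z n a
        _ = z * (a * n) := by rw [← hn]
        _ = (z * a) * n := (mul_assoc z a n).symm
    have ha_eq : a = g * (g⁻¹ * a * g) * g⁻¹ := by group
    calc a * (g * n * g⁻¹) = g * ((g⁻¹ * a * g) * n) * g⁻¹ := by
          rw [ha_eq]; group
    _ = g * (n * (g⁻¹ * a * g)) * g⁻¹ := by rw [hnc]
    _ = (g * n * g⁻¹) * a := by rw [ha_eq]; group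
  have carrier_sub : ∀ w, w ∈ C → (ConjClasses.mk w).carrier ⊆ (C : Set G) := by
    intro w hw v hv
    rw [ConjClasses.mem_carrier_iff_mk_eq, ConjClasses.mk_eq_mk_iff_isConj] at hv
    have hv' : IsConj w v := hv.symm
    rw [isConj_iff] at hv'
    obtain ⟨c, hc⟩ := hv'
    rcases conj2 c w with hh | hh
    · rw [hc] at hh; rw [hh]; exact hw
    · rw [hc] at hh; rw [hh]; exact mul_mem hzC hw
  have conj_eq : ∀ u v : G, ConjClasses.mk u = ConjClasses.mk v → v = u ∨ v = z * u := by
    intro u v huv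
    rw [ConjClasses.mk_eq_mk_iff_isConj, isConj_iff] at huv
    obtain ⟨c, hc⟩ := huv
    rcases conj2 c u with hh | hh
    · exact Or.inl (by rw [← hc, hh])
    · exact Or.inr (by rw [← hc, hh])
  have conj_one : ∀ v : G, ConjClasses.mk (1 : G) = ConjClasses.mk v → v = 1 := by
    intro v huv
    rw [ConjClasses.mk_eq_mk_iff_isConj, isConj_iff] at huv
    obtain ⟨c, hc⟩ := huv
    rw [← hc]
    group
  have conj_z : ∀ v : G, ConjClasses.mk z = ConjClasses.mk v → v = z := by
    intro v huv
    rw [ConjClasses.mk_eq_mk_iff_isConj, isConj_iff] at huv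
    obtain ⟨c, hc⟩ := huv
    rw [← hc]
    calc c * z * c⁻¹ = z * c * c⁻¹ := by rw [hzc c]
    _ = z := by group
  have hncc : ncc C ≤ 3 := by
    have hmem : ncc C ∈ KG G := ⟨C, hCnormal, hCtop, rfl⟩
    rw [h] at hmem
    simp only [Set.mem_insert_iff, Set.mem_singleton_iff] at hmem
    omega
  have hC4 : ∀ w, w ∈ C → w = 1 ∨ w = z ∨ w = a ∨ w = z * a := by
    intro w hw
    by_contra hcon
    push_neg at hcon
    obtain ⟨hw1, hwz, hwa, hwza⟩ := hcon
    have n12 : ConjClasses.mk (1 : G) ≠ ConjClasses.mk z := fun hh => hz1 (conj_one z hh)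
    have n13 : ConjClasses.mk (1 : G) ≠ ConjClasses.mk a := fun hh => ha1 (conj_one a hh)
    have n14 : ConjClasses.mk (1 : G) ≠ ConjClasses.mk w := fun hh => hw1 (conj_one w hh)
    have n23 : ConjClasses.mk z ≠ ConjClasses.mk a := fun hh => haz (conj_z a hh)
    have n24 : ConjClasses.mk z ≠ ConjClasses.mk w := fun hh => hwz (conj_z w hh)
    have n34 : ConjClasses.mk a ≠ ConjClasses.mk w := by
      intro hh
      rcases conj_eq a w hh with hh' | hh'
      · exact hwa hh'
      · exact hwza hh'
    let T := {c : ConjClasses G // c.carrier ⊆ (C : Set G)}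
    haveI : Fintype T := Fintype.ofFinite T
    let t1 : T := ⟨ConjClasses.mk 1, carrier_sub 1 (one_mem C)⟩
    let t2 : T := ⟨ConjClasses.mk z, carrier_sub z hzC⟩
    let t3 : T := ⟨ConjClasses.mk a, carrier_sub a haC⟩
    let t4 : T := ⟨ConjClasses.mk w, carrier_sub w hw⟩
    have m3 : t3 ∉ ({t4} : Finset T) := by
      simp only [Finset.mem_singleton]
      exact fun hh => n34 (congrArg Subtype.val hh)
    have m2 : t2 ∉ ({t3, t4} : Finset T) := by
      simp only [Finset.mem_insert, Finset.mem_singleton]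
      rintro (hh | hh)
      · exact n23 (congrArg Subtype.val hh)
      · exact n24 (congrArg Subtype.val hh)
    have m1 : t1 ∉ ({t2, t3, t4} : Finset T) := by
      simp only [Finset.mem_insert, Finset.mem_singleton]
      rintro (hh | hh | hh)
      · exact n12 (congrArg Subtype.val hh)
      · exact n13 (congrArg Subtype.val hh)
      · exact n14 (congrArg Subtype.val hh)
    have hc4 : ({t1, t2, t3, t4} : Finset T).card = 4 := by
      rw [Finset.card_insert_of_notMem m1, Finset.card_insert_of_notMem m2,
        Finset.card_insert_of_notMem m3, Finset.card_singleton]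
    have h4 : 4 ≤ ncc C := by
      have hle : ({t1, t2, t3, t4} : Finset T).card ≤ Fintype.card T :=
        Finset.card_le_univ _
      rw [hc4] at hle
      have : Nat.card T = Fintype.card T := Nat.card_eq_fintype_card
      have hTncc : ncc C = Nat.card T := rfl
      omega
    omega
  -- C = {1, z, a, z*a} as a set
  have hCset : (C : Set G) = {1, z, a, z * a} := by
    ext w
    simp only [Set.mem_insert_iff, Set.mem_singleton_iff, SetLike.mem_coe]
    constructor
    · exact hC4 w
    · rintro (rfl | rfl | rfl | rfl)
      exacts [one_mem C, hzC, haC, hzaC]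
  have k3 : a ∉ ({z * a} : Set G) := by
    intro hh
    rw [Set.mem_singleton_iff] at hh
    exact hzaa hh.symm
  have k2 : z ∉ ({a, z * a} : Set G) := by
    intro hh
    rcases hh with hh | hh
    · exact haz hh.symm
    · exact hzaz hh.symm
  have k1 : (1 : G) ∉ ({z, a, z * a} : Set G) := by
    intro hh
    rcases hh with hh | hh | hh
    · exact hz1 hh.symm
    · exact ha1 hh.symm
    · exact hza1 hh.symm
  have hcardC : Nat.card C = 4 := by
    have hcoe : Nat.card C = Set.ncard (C : Set G) := by
      rw [← Nat.card_coe_set_eq]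
      rfl
    rw [hcoe, hCset, Set.ncard_insert_of_notMem k1, Set.ncard_insert_of_notMem k2,
      Set.ncard_insert_of_notMem k3, Set.ncard_singleton]
  -- helpers about the centralizer
  have hmemconj : ∀ x : G, x⁻¹ * a * x = a → x ∈ C := by
    intro x hx
    rw [memC]
    calc a * x = x * (x⁻¹ * a * x) := by group
    _ = x * a := by rw [hx]
  have hnotmem : ∀ x : G, x ∉ C → x⁻¹ * a * x = z * a := by
    intro x hx
    have := conj2 x⁻¹ a
    rw [inv_inv] at this
    rcases this with hh | hh
    · exact absurd (hmemconj x hh) hx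
    · exact hh
  have hidxC : C.index = 2 := by
    rw [Subgroup.index_eq_two_iff]
    refine ⟨b, fun g => ?_⟩
    by_cases hg : g ∈ C
    · refine Or.inr ⟨hg, fun hgb => ?_⟩
      have : b ∈ C := by
        have := mul_mem (inv_mem hg) hgb
        rwa [← mul_assoc, inv_mul_cancel, one_mul] at this
      exact hbC this
    · refine Or.inl ⟨?_, hg⟩
      apply hmemconj
      have hg' := hnotmem g hg
      have hb' := hnotmem b hbC
      calc (g * b)⁻¹ * a * (g * b) = b⁻¹ * (g⁻¹ * a * g) * b := by group
      _ = b⁻¹ * (z * a) * b := by rw [hg']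
      _ = (b⁻¹ * z) * a * b := by rw [← mul_assoc]
      _ = (z * b⁻¹) * a * b := by rw [hzc b⁻¹]
      _ = z * (b⁻¹ * a * b) := by rw [mul_assoc z b⁻¹ a, mul_assoc z (b⁻¹ * a) b]
      _ = z * (z * a) := by rw [hb']
      _ = a := by rw [← mul_assoc, hz2, one_mul]
  have hcardG : Nat.card G = 8 := by
    have hmi := Subgroup.card_mul_index C
    rw [hcardC, hidxC] at hmi
    omega
  refine ⟨?_, hcardG⟩
  ext w
  constructor
  · intro hw
    rcases hKz w hw with rfl | rfl
    · exact one_mem _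
    · exact Subgroup.mem_center_iff.mpr (fun g => hzc g)
  · intro hw
    have hw' := Subgroup.mem_center_iff.mp hw
    have hwC : w ∈ C := (memC w).mpr (hw' a)
    rcases hC4 w hwC with rfl | rfl | rfl | rfl
    · exact one_mem _
    · exact hzK
    · exact absurd (hw' b).symm hab
    · exfalso
      apply hab
      calc a * b = z * (z * a) * b := by rw [← mul_assoc, hz2, one_mul]
      _ = z * (b * (z * a)) := by rw [mul_assoc, ← hw' b]
      _ = (z * b) * (z * a) := by rw [← mul_assoc]
      _ = (b * z) * (z * a) := by rw [hzc b]
      _ = b * ((z * z) * a) := by group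
      _ = b * a := by rw [hz2, one_mul]

end AuxLemmas

/-- A finite non-abelian `{1,2,3}`-decomposable group whose derived subgroup has order 2
satisfies `G' = Z(G)`, is a 2-group of order 8, and is isomorphic to `D₈` or `Q₈`. -/
theorem nonabelian_123_derived_order_two {G : Type*} [Group G] [Finite G]
    (hna : ¬ ∀ a b : G, a * b = b * a)
    (h : XDecomposable G {1, 2, 3}) (h2 : Nat.card (commutator G) = 2) :
    commutator G = Subgroup.center G ∧ IsPGroup 2 G ∧ Nat.card G = 8 ∧
      (Nonempty (G ≃* DihedralGroup 4) ∨ Nonempty (G ≃* QuaternionGroup 2)) := by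
  obtain ⟨hc, hcard⟩ := main_part1 hna h h2
  refine ⟨hc, IsPGroup.of_card (n := 3) (by rw [hcard]; norm_num), hcard, ?_⟩
  obtain ⟨r, s, hr, h1, hs, hcase⟩ := classify8' hcard hna
  rcases hcase with hss | hss
  · exact Or.inl (toD8 hr h1 hss hs hcard)
  · exact Or.inr (toQ8 hr h1 hss hs hcard)
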